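/- If u, v : ℝ² → ℝ are C³ with u² + v² = 1 and u·Δv = v·Δu on a rectangle R = [a1,a2]×[b1,b2], then the function f(x,y) = exp(∫_{b1}^{y} G2(x,t) dt + ∫_{a1}^{x} G1(s,b1) ds) satisfies f_x = G1·f and f_y = G2·f, where G1 = -u·u_x - v·v_x - v·u_y + u·v_y and G2 = -u·u_y - v·v_y - u·v_x + v·u_x. -/

import Mathlib

noncomputable def pdx (u : ℝ × ℝ → ℝ) (p : ℝ × ℝ) : ℝ := fderiv ℝ u p (1, 0)
noncomputable def pdy (u : ℝ × ℝ → ℝ) (p : ℝ × ℝ) : ℝ := fderiv ℝ u p (0, 1)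
noncomputable def plap (u : ℝ × ℝ → ℝ) (p : ℝ × ℝ) : ℝ := pdx (pdx u) p + pdy (pdy u) p

section aux

/-- Schwarz symmetry of second partials for a C³ function. -/
lemma pdswap (u : ℝ × ℝ → ℝ) (hu : ContDiff ℝ 3 u) (p : ℝ × ℝ) :
    pdx (pdy u) p = pdy (pdx u) p := by
  have hd : DifferentiableAt ℝ (fderiv ℝ u) p :=
    ((hu.fderiv_right (m := 2) (by norm_num)).differentiable (by norm_num)).differentiableAt
  have hsym := (hu.contDiffAt (x := p)).isSymmSndFDerivAt (by norm_num)
  have h1 : pdx (pdy u) p = (fderiv ℝ (fderiv ℝ u) p (1,0)) (0,1) := by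
    have h : pdy u = fun q => fderiv ℝ u q (0,1) := rfl
    rw [pdx, h, fderiv_clm_apply hd (differentiableAt_const _)]
    simp
  have h2 : pdy (pdx u) p = (fderiv ℝ (fderiv ℝ u) p (0,1)) (1,0) := by
    have h : pdx u = fun q => fderiv ℝ u q (1,0) := rfl
    rw [pdy, h, fderiv_clm_apply hd (differentiableAt_const _)]
    simp
  rw [h1, h2]
  exact hsym (1,0) (0,1)

lemma hline_y (g : ℝ × ℝ → ℝ) (hg : Differentiable ℝ g) (x t : ℝ) :
    HasDerivAt (fun s => g (x, s)) (pdy g (x, t)) t :=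
  (hg (x, t)).hasFDerivAt.comp_hasDerivAt t ((hasDerivAt_const t x).prodMk (hasDerivAt_id t))

lemma hline_x (g : ℝ × ℝ → ℝ) (hg : Differentiable ℝ g) (x t : ℝ) :
    HasDerivAt (fun s => g (s, t)) (pdx g (x, t)) x :=
  (hg (x, t)).hasFDerivAt.comp_hasDerivAt x ((hasDerivAt_id x).prodMk (hasDerivAt_const x t))

end aux

set_option maxHeartbeats 1000000 in
/-- If `u, v` are `C³` with `u² + v² = 1` and `u·Δv = v·Δu` on the rectangle
`R = [a1,a2] × [b1,b2]`, then
`f(x,y) = exp(∫_{b1}^{y} G2(x,t) dt + ∫_{a1}^{x} G1(s,b1) ds)` satisfies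
`f_x = G1·f` and `f_y = G2·f` on `R`, where `G1, G2` are as in the Cauchy–Riemann reduction. -/
theorem stmt2 (a1 a2 b1 b2 : ℝ) (ha : a1 < a2) (hb : b1 < b2)
    (R : Set (ℝ × ℝ)) (hR : R = Set.Icc a1 a2 ×ˢ Set.Icc b1 b2)
    (u v : ℝ × ℝ → ℝ)
    (hu : ContDiff ℝ 3 u) (hv : ContDiff ℝ 3 v)
    (hnorm : ∀ p ∈ R, (u p) ^ 2 + (v p) ^ 2 = 1)
    (hlap : ∀ p ∈ R, u p * plap v p = v p * plap u p)
    (G1 G2 : ℝ × ℝ → ℝ)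
    (hG1 : G1 = fun p => -(u p) * pdx u p - v p * pdx v p - v p * pdy u p + u p * pdy v p)
    (hG2 : G2 = fun p => -(u p) * pdy u p - v p * pdy v p - u p * pdx v p + v p * pdx u p)
    (f : ℝ × ℝ → ℝ)
    (hf : f = fun p => Real.exp ((∫ t in b1..p.2, G2 (p.1, t)) + ∫ s in a1..p.1, G1 (s, b1))) :
    ∀ p ∈ R, pdx f p = G1 p * f p ∧ pdy f p = G2 p * f p := by
  -- basic regularity
  have hu2 : ContDiff ℝ 2 u := hu.of_le (by norm_num)
  have hv2 : ContDiff ℝ 2 v := hv.of_le (by norm_num)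
  have hpxu : ContDiff ℝ 2 (pdx u) := (hu.fderiv_right (by norm_num)).clm_apply contDiff_const
  have hpyu : ContDiff ℝ 2 (pdy u) := (hu.fderiv_right (by norm_num)).clm_apply contDiff_const
  have hpxv : ContDiff ℝ 2 (pdx v) := (hv.fderiv_right (by norm_num)).clm_apply contDiff_const
  have hpyv : ContDiff ℝ 2 (pdy v) := (hv.fderiv_right (by norm_num)).clm_apply contDiff_const
  have hG1c : ContDiff ℝ 2 G1 := by
    rw [hG1]
    exact ((hu2.neg.mul hpxu).sub (hv2.mul hpxv) |>.sub (hv2.mul hpyu)).add (hu2.mul hpyv)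
  have hG2c : ContDiff ℝ 2 G2 := by
    rw [hG2]
    exact ((hu2.neg.mul hpyu).sub (hv2.mul hpyv) |>.sub (hu2.mul hpxv)).add (hv2.mul hpxu)
  have hG1cont : Continuous G1 := hG1c.continuous
  have hG2cont : Continuous G2 := hG2c.continuous
  have hG1diff : Differentiable ℝ G1 := hG1c.differentiable (by norm_num)
  have hG2diff : Differentiable ℝ G2 := hG2c.differentiable (by norm_num)
  have hpxG2cont : Continuous (pdx G2) :=
    (((hG2c.fderiv_right (m := 1) (by norm_num)).clm_apply contDiff_const).continuous)
  -- compatibility : ∂y G1 = ∂x G2 on R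
  have compat : ∀ q ∈ R, pdy G1 q = pdx G2 q := by
    intro q hq
    have hud := ((hu.differentiable (by norm_num)) q).hasFDerivAt
    have hvd := ((hv.differentiable (by norm_num)) q).hasFDerivAt
    have hpxud := ((hpxu.differentiable (by norm_num)) q).hasFDerivAt
    have hpyud := ((hpyu.differentiable (by norm_num)) q).hasFDerivAt
    have hpxvd := ((hpxv.differentiable (by norm_num)) q).hasFDerivAt
    have hpyvd := ((hpyv.differentiable (by norm_num)) q).hasFDerivAt
    have H1 := (((hud.neg.mul hpxud).sub (hvd.mul hpxvd)).sub (hvd.mul hpyud)).add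
      (hud.mul hpyvd)
    have H2 := (((hud.neg.mul hpyud).sub (hvd.mul hpyvd)).sub (hud.mul hpxvd)).add
      (hvd.mul hpxud)
    have e1 : pdy G1 q =
        -(u q) * pdy (pdx u) q + pdy u q * (-(pdx u q))
          - (v q * pdy (pdx v) q + pdy v q * pdx v q)
          - (v q * pdy (pdy u) q + pdy v q * pdy u q)
          + (u q * pdy (pdy v) q + pdy u q * pdy v q) := by
      rw [pdy, hG1, show (fun p => -(u p) * pdx u p - v p * pdx v p - v p * pdy u p + u p * pdy v p) = (-u * pdx u - v * pdx v - v * pdy u + u * pdy v) from rfl, H1.fderiv]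
      simp [pdx, pdy, smul_eq_mul]
      ring
    have e2 : pdx G2 q =
        -(u q) * pdx (pdy u) q + pdx u q * (-(pdy u q))
          - (v q * pdx (pdy v) q + pdx v q * pdy v q)
          - (u q * pdx (pdx v) q + pdx u q * pdx v q)
          + (v q * pdx (pdx u) q + pdx v q * pdx u q) := by
      rw [pdx, hG2, show (fun p => -(u p) * pdy u p - v p * pdy v p - u p * pdx v p + v p * pdx u p) = (-u * pdy u - v * pdy v - u * pdx v + v * pdx u) from rfl, H2.fderiv]
      simp [pdx, pdy, smul_eq_mul]
      ring
    have su := pdswap u hu q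
    have sv := pdswap v hv q
    have hl := hlap q hq
    rw [plap, plap] at hl
    rw [e1, e2]
    linear_combination hl + (u q) * su + (v q) * sv
  -- fix the point
  rintro ⟨x₀, y₀⟩ hp
  rw [hR, Set.mem_prod] at hp
  obtain ⟨hx₀, hy₀⟩ := hp
  have hy₀1 : b1 ≤ y₀ := hy₀.1
  -- continuity of slices
  have hcy : ∀ x : ℝ, Continuous fun t => G2 (x, t) := fun x =>
    hG2cont.comp (continuous_const.prodMk continuous_id)
  have hcG1b : Continuous fun s => G1 (s, b1) :=
    hG1cont.comp (continuous_id.prodMk continuous_const)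
  have hcpx : ∀ x : ℝ, Continuous fun t => pdx G2 (x, t) := fun x =>
    hpxG2cont.comp (continuous_const.prodMk continuous_id)
  -- Part ψ : x ↦ ∫_{a1}^x G1(s,b1) ds
  have hψ : HasDerivAt (fun x => ∫ s in a1..x, G1 (s, b1)) (G1 (x₀, b1)) x₀ :=
    (hcG1b.integral_hasStrictDerivAt a1 x₀).hasDerivAt
  -- Part Φ₁ : x ↦ ∫_{b1}^{y₀} G2(x,t) dt, derivative under the integral sign
  obtain ⟨C, hC⟩ : ∃ C, ∀ q ∈ Set.Icc (x₀-1) (x₀+1) ×ˢ Set.uIcc b1 y₀, ‖pdx G2 q‖ ≤ C :=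
    (isCompact_Icc.prod isCompact_uIcc).exists_bound_of_continuousOn hpxG2cont.continuousOn
  have hΦ₁ : HasDerivAt (fun x => ∫ t in b1..y₀, G2 (x, t))
      (∫ t in b1..y₀, pdx G2 (x₀, t)) x₀ := by
    refine (intervalIntegral.hasDerivAt_integral_of_dominated_loc_of_deriv_le
      (F := fun x t => G2 (x, t)) (F' := fun x t => pdx G2 (x, t)) (bound := fun _ => C)
      (s := Metric.ball x₀ 1) (Metric.ball_mem_nhds x₀ one_pos) ?_ ?_ ?_ ?_ ?_ ?_).2
    · exact Filter.Eventually.of_forall fun x => (hcy x).aestronglyMeasurable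
    · exact (hcy x₀).intervalIntegrable _ _
    · exact (hcpx x₀).aestronglyMeasurable
    · refine Filter.Eventually.of_forall fun t ht x hx => hC _ ?_
      constructor
      · rw [Metric.mem_ball, Real.dist_eq] at hx
        have := abs_le.1 hx.le
        exact ⟨by linarith [this.1], by linarith [this.2]⟩
      · exact Set.uIoc_subset_uIcc ht
    · exact intervalIntegrable_const
    · exact Filter.Eventually.of_forall fun t _ x _ =>
        hline_x G2 hG2diff x t
  -- rewrite the x-derivative integral using compatibility and FTC
  have hA : (∫ t in b1..y₀, pdx G2 (x₀, t)) = G1 (x₀, y₀) - G1 (x₀, b1) := by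
    have h1 : (∫ t in b1..y₀, pdx G2 (x₀, t)) = ∫ t in b1..y₀, pdy G1 (x₀, t) := by
      refine intervalIntegral.integral_congr fun t ht => ?_
      rw [Set.uIcc_of_le hy₀1] at ht
      refine (compat (x₀, t) ?_).symm
      rw [hR]
      exact ⟨hx₀, ht.1, le_trans ht.2 hy₀.2⟩
    rw [h1]
    refine intervalIntegral.integral_eq_sub_of_hasDerivAt (fun t _ => hline_y G1 hG1diff x₀ t) ?_
    have hpyG1cont : Continuous (pdy G1) :=
      ((hG1c.fderiv_right (m := 1) (by norm_num)).clm_apply contDiff_const).continuous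
    exact (hpyG1cont.comp (continuous_const.prodMk continuous_id)).intervalIntegrable _ _
  -- Part Φ₂ : p ↦ ∫_{y₀}^{p.2} G2(p.1,t) dt has full derivative G2(p₀) • snd at p₀
  have hΦ₂ : HasFDerivAt (fun p : ℝ × ℝ => ∫ t in y₀..p.2, G2 (p.1, t))
      ((G2 (x₀, y₀)) • ContinuousLinearMap.snd ℝ ℝ ℝ) (x₀, y₀) := by
    rw [hasFDerivAt_iff_isLittleO_nhds_zero, Asymptotics.isLittleO_iff]
    intro c hc
    obtain ⟨δ, hδ, hδ'⟩ := Metric.continuousAt_iff.1 (hG2cont.continuousAt (x := ((x₀ : ℝ), y₀))) c hc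
    have : ∀ h : ℝ × ℝ, dist h 0 < δ →
        ‖(∫ t in y₀..(y₀ + h.2), G2 (x₀ + h.1, t)) - 0 - G2 (x₀, y₀) * h.2‖ ≤ c * ‖h‖ := by
      intro h hh
      have hd1 : |h.1| < δ := by
        have := (Prod.dist_eq (x := h) (y := 0)).symm ▸ hh
        simp only [Real.dist_eq, sub_zero, Prod.fst_zero, Prod.snd_zero] at this ⊢
        exact lt_of_le_of_lt (le_max_left _ _) this
      have hd2 : |h.2| < δ := by
        have := (Prod.dist_eq (x := h) (y := 0)).symm ▸ hh
        simp only [Real.dist_eq, sub_zero, Prod.fst_zero, Prod.snd_zero] at this ⊢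
        exact lt_of_le_of_lt (le_max_right _ _) this
      have key : ‖∫ t in y₀..(y₀ + h.2), (G2 (x₀ + h.1, t) - G2 (x₀, y₀))‖ ≤ c * |h.2| := by
        have hb : ∀ t ∈ Set.uIoc y₀ (y₀ + h.2), ‖G2 (x₀ + h.1, t) - G2 (x₀, y₀)‖ ≤ c := by
          intro t ht
          have ht' := Set.uIoc_subset_uIcc ht
          have htd : |t - y₀| ≤ |h.2| := by
            rcases le_total y₀ (y₀ + h.2) with h' | h'
            · rw [Set.uIcc_of_le h'] at ht'
              rw [abs_le, abs_of_nonneg (by linarith : (0:ℝ) ≤ h.2)]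
              exact ⟨by linarith [ht'.1], by linarith [ht'.2]⟩
            · rw [Set.uIcc_of_ge h'] at ht'
              rw [abs_le, abs_of_nonpos (by linarith : h.2 ≤ (0:ℝ))]
              exact ⟨by linarith [ht'.1], by linarith [ht'.2]⟩
          have hdist : dist (x₀ + h.1, t) (x₀, y₀) < δ := by
            rw [Prod.dist_eq, Real.dist_eq, Real.dist_eq]
            apply max_lt
            · simpa using hd1
            · exact lt_of_le_of_lt (by simpa using htd) hd2
          exact le_of_lt (by simpa [Real.dist_eq] using hδ' hdist)
        calc ‖∫ t in y₀..(y₀ + h.2), (G2 (x₀ + h.1, t) - G2 (x₀, y₀))‖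
            ≤ c * |y₀ + h.2 - y₀| :=
              intervalIntegral.norm_integral_le_of_norm_le_const hb
          _ = c * |h.2| := by ring_nf
      have hint : IntervalIntegrable (fun t => G2 (x₀ + h.1, t)) MeasureTheory.volume
          y₀ (y₀ + h.2) := (hcy _).intervalIntegrable _ _
      have hsplit : (∫ t in y₀..(y₀ + h.2), G2 (x₀ + h.1, t)) - G2 (x₀, y₀) * h.2
          = ∫ t in y₀..(y₀ + h.2), (G2 (x₀ + h.1, t) - G2 (x₀, y₀)) := by
        rw [intervalIntegral.integral_sub hint intervalIntegrable_const,
          intervalIntegral.integral_const]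
        simp [smul_eq_mul]
        ring
      have hnorm2 : |h.2| ≤ ‖h‖ := by
        rw [Prod.norm_def]
        exact le_max_right _ _
      calc ‖(∫ t in y₀..(y₀ + h.2), G2 (x₀ + h.1, t)) - 0 - G2 (x₀, y₀) * h.2‖
          = ‖∫ t in y₀..(y₀ + h.2), (G2 (x₀ + h.1, t) - G2 (x₀, y₀))‖ := by
            rw [sub_zero, hsplit]
        _ ≤ c * |h.2| := key
        _ ≤ c * ‖h‖ := by nlinarith [abs_nonneg h.2]
    refine Metric.eventually_nhds_iff.2 ⟨δ, hδ, fun {h} hh => ?_⟩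
    have := this h (by simpa [dist_zero_right] using hh)
    simpa [intervalIntegral.integral_same, Prod.fst_add, Prod.snd_add, smul_eq_mul] using this
  -- assemble the full derivative of the exponent
  have hsplit : ∀ p : ℝ × ℝ, (∫ t in b1..p.2, G2 (p.1, t))
      = (∫ t in b1..y₀, G2 (p.1, t)) + ∫ t in y₀..p.2, G2 (p.1, t) := fun p =>
    (intervalIntegral.integral_add_adjacent_intervals ((hcy p.1).intervalIntegrable _ _)
      ((hcy p.1).intervalIntegrable _ _)).symm
  have hΦ₁' : HasFDerivAt (fun p : ℝ × ℝ => ∫ t in b1..y₀, G2 (p.1, t))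
      ((∫ t in b1..y₀, pdx G2 (x₀, t)) • ContinuousLinearMap.fst ℝ ℝ ℝ) (x₀, y₀) :=
    (hΦ₁.comp_hasFDerivAt (x₀, y₀) (hasFDerivAt_fst (𝕜 := ℝ) (E := ℝ) (F := ℝ) (p := (x₀, y₀))) :)
  have hψ' : HasFDerivAt (fun p : ℝ × ℝ => ∫ s in a1..p.1, G1 (s, b1))
      ((G1 (x₀, b1)) • ContinuousLinearMap.fst ℝ ℝ ℝ) (x₀, y₀) :=
    (hψ.comp_hasFDerivAt (x₀, y₀) (hasFDerivAt_fst (𝕜 := ℝ) (E := ℝ) (F := ℝ) (p := (x₀, y₀))) :)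
  have hF : HasFDerivAt
      (fun p : ℝ × ℝ => (∫ t in b1..p.2, G2 (p.1, t)) + ∫ s in a1..p.1, G1 (s, b1))
      ((G1 (x₀, y₀)) • ContinuousLinearMap.fst ℝ ℝ ℝ
        + (G2 (x₀, y₀)) • ContinuousLinearMap.snd ℝ ℝ ℝ) (x₀, y₀) := by
    have h : HasFDerivAt (fun p : ℝ × ℝ =>
        ((∫ t in b1..y₀, G2 (p.1, t)) + ∫ t in y₀..p.2, G2 (p.1, t))
          + ∫ s in a1..p.1, G1 (s, b1)) _ (x₀, y₀) := (hΦ₁'.add hΦ₂).add hψ'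
    have heq : (fun p : ℝ × ℝ =>
        ((∫ t in b1..y₀, G2 (p.1, t)) + ∫ t in y₀..p.2, G2 (p.1, t))
          + ∫ s in a1..p.1, G1 (s, b1))
        = fun p : ℝ × ℝ => (∫ t in b1..p.2, G2 (p.1, t)) + ∫ s in a1..p.1, G1 (s, b1) := by
      funext p; rw [hsplit p]
    rw [heq] at h
    refine h.congr_fderiv ?_
    rw [hA]
    module
  have hfF : HasFDerivAt f
      ((Real.exp ((∫ t in b1..y₀, G2 (x₀, t)) + ∫ s in a1..x₀, G1 (s, b1))) •
        ((G1 (x₀, y₀)) • ContinuousLinearMap.fst ℝ ℝ ℝ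
          + (G2 (x₀, y₀)) • ContinuousLinearMap.snd ℝ ℝ ℝ)) (x₀, y₀) := by
    rw [hf]
    exact (Real.hasDerivAt_exp _).comp_hasFDerivAt (x₀, y₀) hF
  have hfval : f (x₀, y₀) = Real.exp ((∫ t in b1..y₀, G2 (x₀, t)) + ∫ s in a1..x₀, G1 (s, b1)) := by
    rw [hf]
  constructor
  · rw [pdx, hfF.fderiv, hfval]
    simp [smul_eq_mul]
    ring
  · rw [pdy, hfF.fderiv, hfval]
    simp [smul_eq_mul]
    ring
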